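/- Let V be a finite-dimensional real vector space and let f₁, ..., fₙ, g be linear functionals on V such that for all x ∈ V, ∑_{i=1}^{n} fᵢ(x)·ln|fᵢ(x)| = g(x) (with the convention 0·ln 0 = 0). Then for each index i with fᵢ ≠ 0, there exists an index j ≠ i and a real number λ such that fᵢ = λ·fⱼ. -/

import Mathlib

open Filter Topology

/-- Lemma 4.3: if a finite sum `∑ᵢ fᵢ(x) ln|fᵢ(x)|` of linear functionals composed
with `t ↦ t ln|t|` is itself a linear functional `g`, then each nonzero `fᵢ` is
proportional to some `fⱼ` with `j ≠ i`. (Here `Real.log 0 = 0`, so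
`t * Real.log |t|` vanishes at `t = 0`.) -/
theorem linear_sum_xlogx_proportional
    {V : Type*} [AddCommGroup V] [Module ℝ V] [FiniteDimensional ℝ V]
    {m : ℕ} (f : Fin m → (V →ₗ[ℝ] ℝ)) (g : V →ₗ[ℝ] ℝ)
    (h : ∀ x : V, ∑ i, f i x * Real.log |f i x| = g x) :
    ∀ i : Fin m, f i ≠ 0 → ∃ j : Fin m, j ≠ i ∧ ∃ l : ℝ, f i = l • f j := by
  intro i hfi
  by_contra hcon
  push_neg at hcon
  -- `hcon : ∀ j, j ≠ i → ∀ l, f i ≠ l • f j`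
  have hker : ∀ j : Fin m, j ≠ i → f j ≠ 0 →
      ¬ (LinearMap.ker (f i) ≤ LinearMap.ker (f j)) := by
    intro j hj hfj hle
    have hmem : f j ∈ Submodule.span ℝ (Set.range (fun _ : Unit => f i)) :=
      mem_span_of_iInf_ker_le_ker (L := fun _ : Unit => f i) (K := f j) (by simpa using hle)
    rw [Set.range_const, Submodule.mem_span_singleton] at hmem
    obtain ⟨c, hc⟩ := hmem
    have hc0 : c ≠ 0 := by
      rintro rfl
      rw [zero_smul] at hc
      exact hfj hc.symm
    exact hcon j hj c⁻¹ (by rw [← hc, smul_smul, inv_mul_cancel₀ hc0, one_smul])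
  set K := LinearMap.ker (f i) with hK
  let B := {j : Fin m // j ≠ i ∧ f j ≠ 0}
  let p : B → Subspace ℝ K := fun j => LinearMap.ker ((f j.1).domRestrict K)
  have hp : ∀ j : B, p j ≠ ⊤ := by
    intro j hj
    apply hker j.1 j.2.1 j.2.2
    intro x hx
    have hxm : (⟨x, hx⟩ : K) ∈ p j := hj ▸ Submodule.mem_top
    simpa [p, LinearMap.mem_ker] using hxm
  have hcover : (⋃ j : B, (p j : Set K)) ≠ Set.univ := by
    intro hc
    obtain ⟨j, hj⟩ := Subspace.exists_eq_top_of_iUnion_eq_univ hc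
    exact hp j hj
  obtain ⟨x0, hx0⟩ : ∃ x0 : K, ∀ j : B, x0 ∉ p j := by
    rcases (Set.ne_univ_iff_exists_notMem _).1 hcover with ⟨x, hx⟩
    exact ⟨x, fun j hj => hx (Set.mem_iUnion.2 ⟨j, hj⟩)⟩
  have hx0i : f i (x0 : V) = 0 := x0.2
  have hx0j : ∀ j : Fin m, j ≠ i → f j ≠ 0 → f j (x0 : V) ≠ 0 := by
    intro j hj hfj
    have := hx0 ⟨j, hj, hfj⟩
    simpa [p, LinearMap.mem_ker] using this
  obtain ⟨v0, hv0⟩ : ∃ v0, f i v0 ≠ 0 := by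
    by_contra hv
    push_neg at hv
    exact hfi (LinearMap.ext fun x => by simp [hv])
  set v : V := (f i v0)⁻¹ • v0 with hv
  have hvi : f i v = 1 := by
    simp [hv, inv_mul_cancel₀ hv0]
  set a : Fin m → ℝ := fun j => f j (x0 : V) with ha
  set b : Fin m → ℝ := fun j => f j v with hb
  set S : ℝ → ℝ :=
    fun t => ∑ j ∈ Finset.univ.erase i, (a j + t * b j) * Real.log (a j + t * b j) with hS
  have key : ∀ t : ℝ, t * Real.log t + S t = g x0 + t * g v := by
    intro t
    have hh := h ((x0 : V) + t • v)
    simp only [map_add, map_smul, smul_eq_mul, Real.log_abs] at hh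
    rw [← Finset.add_sum_erase _ _ (Finset.mem_univ i)] at hh
    simpa [S, a, b, hx0i, hvi] using hh
  have hS0 : S 0 = g x0 := by
    have := key 0
    simpa using this
  -- each term of S is differentiable at 0
  have hterm : ∀ j : Fin m, ∃ dj : ℝ, j ≠ i →
      HasDerivAt (fun t : ℝ => (a j + t * b j) * Real.log (a j + t * b j)) dj 0 := by
    intro j
    rcases eq_or_ne (f j) 0 with hfj | hfj
    · refine ⟨0, fun _ => ?_⟩
      have haj : a j = 0 := by simp [ha, hfj]
      have hbj : b j = 0 := by simp [hb, hfj]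
      simpa [haj, hbj] using hasDerivAt_const (0 : ℝ) (0 : ℝ)
    · refine ⟨(Real.log (a j) + 1) * b j, fun hj => ?_⟩
      have haj : a j ≠ 0 := hx0j j hj hfj
      have h1 : HasDerivAt (fun t : ℝ => a j + t * b j) (b j) 0 := by
        simpa using ((hasDerivAt_id (0 : ℝ)).mul_const (b j)).const_add (a j)
      have h2 : HasDerivAt (fun u : ℝ => u * Real.log u) (Real.log (a j) + 1)
          ((fun t : ℝ => a j + t * b j) 0) := by
        simpa using Real.hasDerivAt_mul_log haj
      simpa [Function.comp_def] using h2.comp 0 h1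
  choose d hd using hterm
  have hSd : HasDerivAt S (∑ j ∈ Finset.univ.erase i, d j) 0 :=
    HasDerivAt.fun_sum fun j hj => hd j (Finset.ne_of_mem_erase hj)
  set d0 : ℝ := ∑ j ∈ Finset.univ.erase i, d j with hd0
  have hslope : Tendsto (fun t => (S t - S 0) / t) (𝓝[>] (0 : ℝ)) (𝓝 d0) := by
    have := hasDerivAt_iff_tendsto_slope.1 hSd
    have h2 : Tendsto (slope S 0) (𝓝[>] (0 : ℝ)) (𝓝 d0) :=
      this.mono_left (nhdsWithin_mono _ fun x hx => ne_of_gt hx)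
    refine h2.congr fun t => ?_
    simp [slope_def_field, div_eq_inv_mul]
  have hlog : Tendsto Real.log (𝓝[>] (0 : ℝ)) (𝓝 (g v - d0)) := by
    have h2 : Tendsto (fun t => g v - (S t - S 0) / t) (𝓝[>] (0 : ℝ)) (𝓝 (g v - d0)) :=
      tendsto_const_nhds.sub hslope
    refine h2.congr' ?_
    filter_upwards [self_mem_nhdsWithin] with t ht
    have ht0 : t ≠ 0 := ne_of_gt ht
    have hkt := key t
    rw [hS0]
    have h4 : S t - g ↑x0 = t * g v - t * Real.log t := by linarith
    rw [h4, sub_div, mul_div_cancel_left₀ _ ht0, mul_div_cancel_left₀ _ ht0]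
    ring
  exact not_tendsto_nhds_of_tendsto_atBot Real.tendsto_log_nhdsGT_zero _ hlog
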